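/- For all φ₀, φ₁ with 0 < φ₀ < φ₁ < π/2, the map T_D(α) := 4T(α) − T₁(α, φ₀) − T₁(α, φ₁) satisfies T_D(α) > T^* := 3T(φ₁) − T₁(φ₁, φ₀) for every α ∈ (φ₁, π/2). -/

import Mathlib

open Real

/-- The time map `T(α) = ∫₀^α dx / √(cos 2x − cos 2α)`. -/
noncomputable def timeMapT (α : ℝ) : ℝ :=
  ∫ x in (0:ℝ)..α, 1 / Real.sqrt (Real.cos (2 * x) - Real.cos (2 * α))

/-- The time map `T₁(α, φ) = ∫₀^φ dx / √(cos 2x − cos 2α)`. -/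
noncomputable def timeMapT1 (α φ : ℝ) : ℝ :=
  ∫ x in (0:ℝ)..φ, 1 / Real.sqrt (Real.cos (2 * x) - Real.cos (2 * α))

namespace TDaux

open Real Set intervalIntegral

/-- integrand in x -/
noncomputable def f (α x : ℝ) : ℝ := 1 / Real.sqrt (Real.cos (2 * x) - Real.cos (2 * α))

/-- integrand in θ after substitution -/
noncomputable def G (α θ : ℝ) : ℝ := 1 / Real.sqrt (2 * (1 - Real.sin α ^ 2 * Real.sin θ ^ 2))

lemma cos_diff (x α : ℝ) : Real.cos (2 * x) - Real.cos (2 * α)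
    = 2 * (Real.sin α ^ 2 - Real.sin x ^ 2) := by
  rw [Real.cos_two_mul, Real.cos_two_mul]
  nlinarith [Real.sin_sq_add_cos_sq x, Real.sin_sq_add_cos_sq α]

lemma sin_lt_one_of_lt {α : ℝ} (h0 : 0 ≤ α) (hα : α < π / 2) : Real.sin α < 1 := by
  have hpi : (0:ℝ) < π / 2 := by positivity
  have := Real.strictMonoOn_sin (Set.mem_Icc.2 ⟨by linarith, hα.le⟩)
      (Set.mem_Icc.2 ⟨by linarith, le_refl _⟩) hα
  rwa [Real.sin_pi_div_two] at this

lemma one_sub_pos {α θ : ℝ} (h0 : 0 ≤ α) (hα : α < π / 2) :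
    0 < 1 - Real.sin α ^ 2 * Real.sin θ ^ 2 := by
  have h1 : Real.sin α ^ 2 < 1 := by
    have h2 := sin_lt_one_of_lt h0 hα
    have h3 : 0 ≤ Real.sin α := Real.sin_nonneg_of_nonneg_of_le_pi h0 (by nlinarith [Real.pi_pos])
    nlinarith
  nlinarith [Real.sin_sq_le_one θ, sq_nonneg (Real.sin α), sq_nonneg (Real.sin θ)]

lemma G_pos {α : ℝ} (h0 : 0 ≤ α) (hα : α < π / 2) (θ : ℝ) : 0 < G α θ := by
  unfold G
  have := one_sub_pos (θ := θ) h0 hα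
  positivity

lemma G_cont {α : ℝ} (h0 : 0 ≤ α) (hα : α < π / 2) : Continuous (G α) := by
  unfold G
  apply Continuous.div continuous_const
  · exact (Real.continuous_sqrt.comp (by continuity))
  · intro θ
    have := one_sub_pos (θ := θ) h0 hα
    positivity


/-- the substitution map -/
noncomputable def Φ (α θ : ℝ) : ℝ := Real.arcsin (Real.sin α * Real.sin θ)

lemma abs_lt_one {α θ : ℝ} (h0 : 0 < α) (hα : α < π / 2) : |Real.sin α * Real.sin θ| < 1 := by
  have h1 : Real.sin α < 1 := sin_lt_one_of_lt h0.le hα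
  have h2 : 0 < Real.sin α := Real.sin_pos_of_pos_of_lt_pi h0 (by nlinarith [Real.pi_pos])
  rw [abs_mul]
  calc |Real.sin α| * |Real.sin θ| ≤ |Real.sin α| * 1 := by
        exact mul_le_mul_of_nonneg_left (Real.abs_sin_le_one θ) (abs_nonneg _)
    _ = |Real.sin α| := mul_one _
    _ < 1 := by rwa [abs_of_pos h2]

lemma Φ_hasDeriv {α : ℝ} (h0 : 0 < α) (hα : α < π / 2) (θ : ℝ) :
    HasDerivAt (Φ α) (1 / Real.sqrt (1 - (Real.sin α * Real.sin θ) ^ 2)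
      * (Real.sin α * Real.cos θ)) θ := by
  have habs := abs_lt_one (θ := θ) h0 hα
  have h1 : Real.sin α * Real.sin θ ≠ -1 := by
    intro h; rw [h] at habs; simp at habs
  have h2 : Real.sin α * Real.sin θ ≠ 1 := by
    intro h; rw [h] at habs; simp at habs
  exact (Real.hasDerivAt_arcsin h1 h2).comp θ ((Real.hasDerivAt_sin θ).const_mul (Real.sin α))

lemma sqrt_one_sub_ne {α θ : ℝ} (h0 : 0 < α) (hα : α < π / 2) :
    Real.sqrt (1 - (Real.sin α * Real.sin θ) ^ 2) ≠ 0 := by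
  have habs := abs_lt_one (θ := θ) h0 hα
  have h2 : (Real.sin α * Real.sin θ) ^ 2 < 1 := by
    nlinarith [sq_abs (Real.sin α * Real.sin θ), abs_nonneg (Real.sin α * Real.sin θ)]
  have h3 : 0 < 1 - (Real.sin α * Real.sin θ) ^ 2 := by linarith
  positivity

lemma subst_easy {α : ℝ} (h0 : 0 < α) (hα : α < π / 2) {θa θb : ℝ}
    (ha : 0 ≤ θa) (hab : θa ≤ θb) (hb : θb < π / 2) :
    ∫ x in (Φ α θa)..(Φ α θb), f α x = ∫ θ in θa..θb, G α θ := by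
  have hs1 : Real.sin α < 1 := sin_lt_one_of_lt h0.le hα
  have hs0 : 0 < Real.sin α := Real.sin_pos_of_pos_of_lt_pi h0 (by nlinarith [Real.pi_pos])
  set F' : ℝ → ℝ := fun θ => 1 / Real.sqrt (1 - (Real.sin α * Real.sin θ) ^ 2)
      * (Real.sin α * Real.cos θ) with hF'
  have key : ∫ θ in θa..θb, F' θ • (f α ∘ Φ α) θ = ∫ x in (Φ α θa)..(Φ α θb), f α x := by
    apply intervalIntegral.integral_comp_smul_deriv' (fun θ _ => Φ_hasDeriv h0 hα θ)
    · -- continuity of F'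
      apply ContinuousOn.mul
      · apply ContinuousOn.div continuousOn_const
        · exact (Real.continuous_sqrt.comp (by continuity)).continuousOn
        · exact fun θ _ => sqrt_one_sub_ne h0 hα
      · exact (continuous_const.mul Real.continuous_cos).continuousOn
    · -- continuity of f on image
      intro y hy
      obtain ⟨θ, hθ, rfl⟩ := hy
      rw [Set.uIcc_of_le hab] at hθ
      have hθb1 : Real.sin θ ≤ Real.sin θb :=
        Real.sin_le_sin_of_le_of_le_pi_div_two (by linarith [hθ.1, Real.pi_pos]) hb.le hθ.2
      have hsb : Real.sin θb < 1 := sin_lt_one_of_lt (le_trans (le_trans ha hab) (le_refl _)) hb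
      have hpos : 0 < Real.cos (2 * Φ α θ) - Real.cos (2 * α) := by
        rw [cos_diff]
        have hsin : Real.sin (Φ α θ) = Real.sin α * Real.sin θ := by
          apply Real.sin_arcsin
          · nlinarith [abs_lt_one (θ := θ) h0 hα, abs_nonneg (Real.sin α * Real.sin θ),
              neg_abs_le (Real.sin α * Real.sin θ)]
          · nlinarith [abs_lt_one (θ := θ) h0 hα, le_abs_self (Real.sin α * Real.sin θ)]
        rw [hsin]
        have h1 : Real.sin θ < 1 := lt_of_le_of_lt hθb1 hsb
        have h2 : 0 ≤ Real.sin θ := Real.sin_nonneg_of_nonneg_of_le_pi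
          (le_trans ha hθ.1) (by nlinarith [Real.pi_pos, hθ.2])
        have h4 : 0 < 1 - Real.sin θ ^ 2 := by nlinarith
        have h5 : 0 < Real.sin α ^ 2 * (1 - Real.sin θ ^ 2) := by positivity
        nlinarith [h5]
      have : ContinuousAt (f α) (Φ α θ) := by
        unfold f
        apply ContinuousAt.div continuousAt_const
        · exact (Real.continuous_sqrt.comp (by continuity)).continuousAt
        · positivity
      exact this.continuousWithinAt
  rw [← key]
  apply intervalIntegral.integral_congr
  intro θ hθ
  rw [Set.uIcc_of_le hab] at hθ
  have hc : 0 < Real.cos θ := Real.cos_pos_of_mem_Ioo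
    ⟨by linarith [hθ.1, Real.pi_pos], lt_of_le_of_lt hθ.2 hb⟩
  have hsin : Real.sin (Φ α θ) = Real.sin α * Real.sin θ := by
    apply Real.sin_arcsin
    · nlinarith [abs_lt_one (θ := θ) h0 hα, neg_abs_le (Real.sin α * Real.sin θ)]
    · nlinarith [abs_lt_one (θ := θ) h0 hα, le_abs_self (Real.sin α * Real.sin θ)]
  have hcos2 : Real.cos (2 * Φ α θ) - Real.cos (2 * α)
      = 2 * (Real.sin α * Real.cos θ) ^ 2 := by
    rw [cos_diff, hsin]
    nlinarith [Real.sin_sq_add_cos_sq θ]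
  have hsq : Real.sqrt (Real.cos (2 * Φ α θ) - Real.cos (2 * α))
      = Real.sqrt 2 * (Real.sin α * Real.cos θ) := by
    rw [hcos2, Real.sqrt_mul (by norm_num : (0:ℝ) ≤ 2), Real.sqrt_sq (by positivity)]
  have hsq2 : Real.sqrt (2 * (1 - Real.sin α ^ 2 * Real.sin θ ^ 2))
      = Real.sqrt 2 * Real.sqrt (1 - (Real.sin α * Real.sin θ) ^ 2) := by
    rw [Real.sqrt_mul (by norm_num : (0:ℝ) ≤ 2)]
    ring_nf
  have hne1 : Real.sqrt (1 - (Real.sin α * Real.sin θ) ^ 2) ≠ 0 := sqrt_one_sub_ne h0 hα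
  have hne2 : Real.sqrt 2 ≠ 0 := by positivity
  show F' θ * f α (Φ α θ) = G α θ
  unfold f G
  rw [hsq, hsq2, hF']
  have hprod : Real.sin α * Real.cos θ ≠ 0 := by positivity
  field_simp

lemma sin_sub_ge {α x : ℝ} (hx0 : 0 ≤ x) (hxα : x ≤ α) (hα : α < π / 2) :
    Real.cos α ^ 2 * (α - x) ≤ Real.sin α - Real.sin x := by
  have hπ := Real.pi_pos
  have hss : Real.sin α - Real.sin x
      = 2 * Real.sin ((α - x)/2) * Real.cos ((α + x)/2) := Real.sin_sub_sin α x
  set u := (α - x)/2 with hu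
  set v := (α + x)/2 with hv
  have hu0 : 0 ≤ u := by simp [hu]; linarith
  have huv : u ≤ v := by simp [hu, hv]; linarith
  have hvα : v ≤ α := by simp [hv]; linarith
  have hv2 : v < π / 2 := lt_of_le_of_lt hvα hα
  have hv0 : 0 ≤ v := le_trans hu0 huv
  -- sin u ≥ u * cos u
  have hsu : u * Real.cos u ≤ Real.sin u := by
    rcases eq_or_lt_of_le hu0 with h | h
    · simp [← h]
    · have htan := Real.lt_tan h (lt_of_le_of_lt (le_trans huv hvα) hα)
      have hcu : 0 < Real.cos u := Real.cos_pos_of_mem_Ioo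
        ⟨by linarith, lt_of_le_of_lt (le_trans huv hvα) hα⟩
      rw [Real.tan_eq_sin_div_cos, lt_div_iff₀ hcu] at htan
      linarith
  have hcuv : Real.cos v ≤ Real.cos u :=
    Real.cos_le_cos_of_nonneg_of_le_pi hu0 (by linarith) huv
  have hcvα : Real.cos α ≤ Real.cos v :=
    Real.cos_le_cos_of_nonneg_of_le_pi hv0 (by linarith) hvα
  have hcv : 0 < Real.cos v := Real.cos_pos_of_mem_Ioo ⟨by linarith, hv2⟩
  have hca : 0 ≤ Real.cos α := le_of_lt (Real.cos_pos_of_mem_Ioo ⟨by linarith, hα⟩)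
  have h1 : u * Real.cos v ≤ Real.sin u := by nlinarith
  have h2 : u * (Real.cos v * Real.cos v) ≤ Real.sin u * Real.cos v := by nlinarith
  calc Real.cos α ^ 2 * (α - x) = 2 * u * (Real.cos α * Real.cos α) := by
        rw [hu]; ring
    _ ≤ 2 * u * (Real.cos v * Real.cos v) := by
        nlinarith [mul_le_mul_of_nonneg_left (mul_le_mul hcvα hcvα hca hcv.le)
          (by linarith : (0:ℝ) ≤ 2 * u)]
    _ ≤ 2 * Real.sin u * Real.cos v := by nlinarith
    _ = Real.sin α - Real.sin x := hss.symm

lemma cos_diff_lower {α x : ℝ} (h0 : 0 < α) (hα : α < π / 2)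
    (hx0 : 0 ≤ x) (hxα : x ≤ α) :
    2 * Real.sin α * Real.cos α ^ 2 * (α - x)
      ≤ Real.cos (2 * x) - Real.cos (2 * α) := by
  have hπ := Real.pi_pos
  rw [cos_diff]
  have h1 := sin_sub_ge hx0 hxα hα
  have hsx : 0 ≤ Real.sin x := Real.sin_nonneg_of_nonneg_of_le_pi hx0 (by linarith)
  have hsα : 0 < Real.sin α := Real.sin_pos_of_pos_of_lt_pi h0 (by linarith)
  have hca : 0 ≤ Real.cos α ^ 2 := sq_nonneg _
  have hax : 0 ≤ α - x := by linarith
  have hsub : 0 ≤ Real.sin α - Real.sin x := le_trans (by positivity) h1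
  nlinarith [mul_le_mul_of_nonneg_left h1 hsα.le, mul_nonneg hsub hsx]

lemma f_integrable {α : ℝ} (h0 : 0 < α) (hα : α < π / 2) :
    IntervalIntegrable (f α) MeasureTheory.volume 0 α := by
  have hπ := Real.pi_pos
  set K := 2 * Real.sin α * Real.cos α ^ 2 with hK
  have hsα : 0 < Real.sin α := Real.sin_pos_of_pos_of_lt_pi h0 (by linarith)
  have hcα : 0 < Real.cos α := Real.cos_pos_of_mem_Ioo ⟨by linarith, hα⟩
  have hKpos : 0 < K := by positivity
  have hg : IntervalIntegrable (fun x => (α - x) ^ (-(1/2) : ℝ) / Real.sqrt K)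
      MeasureTheory.volume 0 α := by
    apply IntervalIntegrable.div_const
    have h1 : IntervalIntegrable (fun x : ℝ => x ^ (-(1/2) : ℝ))
        MeasureTheory.volume α 0 := intervalIntegrable_rpow' (by norm_num)
    simpa using h1.comp_sub_left α
  apply hg.mono_fun'
  · apply Measurable.aestronglyMeasurable
    apply Measurable.div measurable_const
    exact (Real.continuous_sqrt.comp (by continuity)).measurable
  · rw [Filter.EventuallyLE, MeasureTheory.ae_restrict_iff' measurableSet_uIoc]
    apply Filter.Eventually.of_forall
    intro x hx
    rw [Set.uIoc_of_le h0.le] at hx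
    have hx0 : 0 < x := hx.1
    have hxα : x ≤ α := hx.2
    have hlow := cos_diff_lower h0 hα hx0.le hxα
    have hfnn : 0 ≤ f α x := by unfold f; positivity
    rw [Real.norm_eq_abs, abs_of_nonneg hfnn]
    unfold f
    rcases eq_or_lt_of_le hxα with h | h
    · subst h
      simp [Real.rpow_neg]
    · have hax : 0 < α - x := by linarith
      have hlow2 : 0 < Real.cos (2 * x) - Real.cos (2 * α) := by nlinarith
      rw [Real.rpow_neg hax.le, ← Real.sqrt_eq_rpow]
      have h1 : Real.sqrt (K * (α - x)) ≤ Real.sqrt (Real.cos (2*x) - Real.cos (2*α)) :=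
        Real.sqrt_le_sqrt (by rw [hK]; exact hlow)
      rw [Real.sqrt_mul hKpos.le] at h1
      have h2 : 0 < Real.sqrt K * Real.sqrt (α - x) := by positivity
      calc 1 / Real.sqrt (Real.cos (2*x) - Real.cos (2*α))
          ≤ 1 / (Real.sqrt K * Real.sqrt (α - x)) := one_div_le_one_div_of_le h2 h1
        _ = (Real.sqrt (α - x))⁻¹ / Real.sqrt K := by
            rw [one_div, mul_inv]; ring

/-- θ-endpoint corresponding to x-value b -/
noncomputable def θof (α b : ℝ) : ℝ := Real.arcsin (Real.sin b / Real.sin α)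

lemma ratio_facts {α b : ℝ} (h0 : 0 < α) (hα : α < π / 2) (hb0 : 0 ≤ b) (hbα : b ≤ α) :
    0 ≤ Real.sin b / Real.sin α ∧ Real.sin b / Real.sin α ≤ 1 := by
  have hπ := Real.pi_pos
  have hsα : 0 < Real.sin α := Real.sin_pos_of_pos_of_lt_pi h0 (by linarith)
  have hsb : 0 ≤ Real.sin b := Real.sin_nonneg_of_nonneg_of_le_pi hb0 (by linarith)
  have hmono : Real.sin b ≤ Real.sin α :=
    Real.sin_le_sin_of_le_of_le_pi_div_two (by linarith) hα.le hbα
  exact ⟨div_nonneg hsb hsα.le, (div_le_one hsα).2 hmono⟩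

lemma Φ_θof {α b : ℝ} (h0 : 0 < α) (hα : α < π / 2) (hb0 : 0 ≤ b) (hbα : b ≤ α) :
    Φ α (θof α b) = b := by
  have hπ := Real.pi_pos
  obtain ⟨hr0, hr1⟩ := ratio_facts h0 hα hb0 hbα
  have hsα : 0 < Real.sin α := Real.sin_pos_of_pos_of_lt_pi h0 (by linarith)
  unfold Φ θof
  rw [Real.sin_arcsin (by linarith) hr1, mul_div_cancel₀ _ hsα.ne',
    Real.arcsin_sin (by linarith) (by linarith)]

lemma subst_full {α c : ℝ} (h0 : 0 < α) (hα : α < π / 2) (hc0 : 0 ≤ c) (hc : c < α) :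
    ∫ x in c..α, f α x = ∫ θ in (θof α c)..(π / 2), G α θ := by
  have hπ := Real.pi_pos
  have hsα : 0 < Real.sin α := Real.sin_pos_of_pos_of_lt_pi h0 (by linarith)
  have hint : IntervalIntegrable (f α) MeasureTheory.volume c α := by
    apply (f_integrable h0 hα).mono_set'
    rw [Set.uIoc_of_le hc.le, Set.uIoc_of_le h0.le]
    exact Set.Ioc_subset_Ioc hc0 le_rfl
  -- identity on [c, α)
  have key : ∀ b ∈ Set.Ico c α, (∫ x in c..b, f α x) = ∫ θ in (θof α c)..(θof α b), G α θ := by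
    intro b hb
    have hb0 : 0 ≤ b := le_trans hc0 hb.1
    obtain ⟨hrc0, hrc1⟩ := ratio_facts h0 hα hc0 hc.le
    obtain ⟨hrb0, hrb1⟩ := ratio_facts h0 hα hb0 hb.2.le
    have hθa0 : 0 ≤ θof α c := Real.arcsin_nonneg.2 hrc0
    have hbhalf : b < π / 2 := lt_trans hb.2 hα
    have hθab : θof α c ≤ θof α b := by
      have hsbc : Real.sin c ≤ Real.sin b :=
        Real.sin_le_sin_of_le_of_le_pi_div_two (by linarith) hbhalf.le hb.1
      exact Real.monotone_arcsin (by gcongr)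
    have hθb : θof α b < π / 2 := by
      apply Real.arcsin_lt_pi_div_two.2
      rw [div_lt_one hsα]
      exact Real.strictMonoOn_sin (Set.mem_Icc.2 ⟨by linarith, hbhalf.le⟩)
        (Set.mem_Icc.2 ⟨by linarith, hα.le⟩) hb.2
    have := subst_easy h0 hα hθa0 hθab hθb
    rwa [Φ_θof h0 hα hc0 hc.le, Φ_θof h0 hα hb0 hb.2.le] at this
  -- limits
  have hIoo : Set.Ioo c α ∈ nhdsWithin α (Set.Iio α) := Ioo_mem_nhdsLT_of_mem ⟨hc, le_refl α⟩
  have ht1 : Filter.Tendsto (fun b => ∫ x in c..b, f α x) (nhdsWithin α (Set.Iio α))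
      (nhds (∫ x in c..α, f α x)) := by
    have hconts : ContinuousOn (fun b => ∫ x in c..b, f α x) (Set.uIcc c α) :=
      intervalIntegral.continuousOn_primitive_interval' (μ := MeasureTheory.volume)
        (a := c) (b₁ := c) (b₂ := α) hint Set.left_mem_uIcc
    have cw := hconts α (Set.right_mem_uIcc)
    apply cw.mono_left
    apply nhdsWithin_le_of_mem
    exact Filter.mem_of_superset hIoo
      (by rw [Set.uIcc_of_le hc.le]; exact fun x hx => ⟨hx.1.le, hx.2.le⟩)
  have ht2 : Filter.Tendsto (fun b => θof α b) (nhdsWithin α (Set.Iio α)) (nhds (π / 2)) := by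
    have hco : Continuous (fun b => θof α b) := by
      unfold θof
      exact Real.continuous_arcsin.comp (Real.continuous_sin.div_const _)
    have h := hco.tendsto α
    have : θof α α = π / 2 := by
      unfold θof; rw [div_self hsα.ne', Real.arcsin_one]
    rw [this] at h
    exact h.mono_left nhdsWithin_le_nhds
  have ht3 : Filter.Tendsto (fun t => ∫ θ in (θof α c)..t, G α θ) (nhds (π / 2))
      (nhds (∫ θ in (θof α c)..(π / 2), G α θ)) := by
    have hΨ := intervalIntegral.continuous_primitive
      (fun a b => ((G_cont h0.le hα).intervalIntegrable (μ := MeasureTheory.volume) a b)) (θof α c)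
    exact hΨ.tendsto (π / 2)
  have ht4 : Filter.Tendsto (fun b => ∫ x in c..b, f α x) (nhdsWithin α (Set.Iio α))
      (nhds (∫ θ in (θof α c)..(π / 2), G α θ)) := by
    apply Filter.Tendsto.congr' ?_ (ht3.comp ht2)
    filter_upwards [hIoo] with b hb
    exact (key b ⟨hb.1.le, hb.2⟩).symm
  exact tendsto_nhds_unique ht1 ht4

lemma θof_nonneg {α b : ℝ} (h0 : 0 < α) (hα : α < π / 2) (hb0 : 0 ≤ b) (hbα : b ≤ α) :
    0 ≤ θof α b := Real.arcsin_nonneg.2 (ratio_facts h0 hα hb0 hbα).1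

lemma θof_lt {α b : ℝ} (h0 : 0 < α) (hα : α < π / 2) (hb0 : 0 ≤ b) (hbα : b < α) :
    θof α b < π / 2 := by
  have hπ := Real.pi_pos
  have hsα : 0 < Real.sin α := Real.sin_pos_of_pos_of_lt_pi h0 (by linarith)
  apply Real.arcsin_lt_pi_div_two.2
  rw [div_lt_one hsα]
  exact Real.strictMonoOn_sin (Set.mem_Icc.2 ⟨by linarith, by linarith⟩)
    (Set.mem_Icc.2 ⟨by linarith, hα.le⟩) hbα

lemma θof_zero {α : ℝ} : θof α 0 = 0 := by
  unfold θof; simp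

lemma G_mono {β α θ : ℝ} (hβ0 : 0 ≤ β) (hβα : β ≤ α) (hα : α < π / 2) :
    G β θ ≤ G α θ := by
  have hπ := Real.pi_pos
  have hsβ : 0 ≤ Real.sin β := Real.sin_nonneg_of_nonneg_of_le_pi hβ0 (by linarith)
  have hmono : Real.sin β ≤ Real.sin α :=
    Real.sin_le_sin_of_le_of_le_pi_div_two (by linarith) hα.le hβα
  have h1 : 0 < 2 * (1 - Real.sin α ^ 2 * Real.sin θ ^ 2) := by
    have := one_sub_pos (θ := θ) (le_trans hβ0 hβα) hα; linarith
  have h2 : 2 * (1 - Real.sin α ^ 2 * Real.sin θ ^ 2)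
      ≤ 2 * (1 - Real.sin β ^ 2 * Real.sin θ ^ 2) := by
    have hsq : Real.sin β ^ 2 ≤ Real.sin α ^ 2 := by nlinarith
    nlinarith [mul_le_mul_of_nonneg_right hsq (sq_nonneg (Real.sin θ))]
  unfold G
  apply one_div_le_one_div_of_le (Real.sqrt_pos.2 h1)
  exact Real.sqrt_le_sqrt h2

end TDaux


open TDaux in
theorem timeMapTD_supercritical_aux (φ₀ φ₁ : ℝ) (h₀ : 0 < φ₀) (h₀₁ : φ₀ < φ₁)
    (h₁ : φ₁ < π / 2) :
    ∀ α ∈ Set.Ioo φ₁ (π / 2),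
      4 * timeMapT α - timeMapT1 α φ₀ - timeMapT1 α φ₁ >
        3 * timeMapT φ₁ - timeMapT1 φ₁ φ₀ := by
  intro α hmem
  obtain ⟨hφ₁α, hαπ⟩ := hmem
  have hπ := Real.pi_pos
  have h0φ₁ : 0 < φ₁ := lt_trans h₀ h₀₁
  have h0α : 0 < α := lt_trans h0φ₁ hφ₁α
  have hφ₀π : φ₀ < π / 2 := lt_trans h₀₁ h₁
  -- integrability of f α and f φ₁ on subintervals
  have hintα : IntervalIntegrable (f α) MeasureTheory.volume 0 α := f_integrable h0α hαπ
  have hintφ₁ : IntervalIntegrable (f φ₁) MeasureTheory.volume 0 φ₁ := f_integrable h0φ₁ h₁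
  have hsub : ∀ c : ℝ, 0 ≤ c → ∀ β : ℝ, c ≤ β → β ≤ α →
      IntervalIntegrable (f α) MeasureTheory.volume c β := by
    intro c hc β hcβ hβ
    apply hintα.mono_set'
    rw [Set.uIoc_of_le hcβ, Set.uIoc_of_le h0α.le]
    exact Set.Ioc_subset_Ioc hc hβ
  have hsubφ₁ : ∀ c : ℝ, 0 ≤ c → ∀ β : ℝ, c ≤ β → β ≤ φ₁ →
      IntervalIntegrable (f φ₁) MeasureTheory.volume c β := by
    intro c hc β hcβ hβ
    apply hintφ₁.mono_set'
    rw [Set.uIoc_of_le hcβ, Set.uIoc_of_le h0φ₁.le]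
    exact Set.Ioc_subset_Ioc hc hβ
  -- expressing the time maps via G-integrals
  have e1 : timeMapT α = ∫ θ in (0:ℝ)..(π / 2), G α θ := by
    have := subst_full h0α hαπ le_rfl h0α
    rw [θof_zero] at this
    exact this
  have e4 : timeMapT φ₁ = ∫ θ in (0:ℝ)..(π / 2), G φ₁ θ := by
    have := subst_full h0φ₁ h₁ le_rfl h0φ₁
    rw [θof_zero] at this
    exact this
  have e2 : timeMapT1 α φ₀ = timeMapT α - ∫ θ in (θof α φ₀)..(π / 2), G α θ := by
    have hadd := intervalIntegral.integral_add_adjacent_intervals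
      (hsub 0 le_rfl φ₀ h₀.le (by linarith)) (hsub φ₀ h₀.le α (by linarith) le_rfl)
    have h2 := subst_full h0α hαπ h₀.le (by linarith)
    show (∫ x in (0:ℝ)..φ₀, f α x) = timeMapT α - _
    have : timeMapT α = ∫ x in (0:ℝ)..α, f α x := rfl
    rw [this, ← hadd, h2]
    ring
  have e3 : timeMapT1 α φ₁ = timeMapT α - ∫ θ in (θof α φ₁)..(π / 2), G α θ := by
    have hadd := intervalIntegral.integral_add_adjacent_intervals
      (hsub 0 le_rfl φ₁ h0φ₁.le hφ₁α.le) (hsub φ₁ h0φ₁.le α hφ₁α.le le_rfl)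
    have h2 := subst_full h0α hαπ h0φ₁.le hφ₁α
    show (∫ x in (0:ℝ)..φ₁, f α x) = timeMapT α - _
    have : timeMapT α = ∫ x in (0:ℝ)..α, f α x := rfl
    rw [this, ← hadd, h2]
    ring
  have e5 : timeMapT1 φ₁ φ₀ = timeMapT φ₁ - ∫ θ in (θof φ₁ φ₀)..(π / 2), G φ₁ θ := by
    have hadd := intervalIntegral.integral_add_adjacent_intervals
      (hsubφ₁ 0 le_rfl φ₀ h₀.le h₀₁.le) (hsubφ₁ φ₀ h₀.le φ₁ h₀₁.le le_rfl)
    have h2 := subst_full h0φ₁ h₁ h₀.le h₀₁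
    show (∫ x in (0:ℝ)..φ₀, f φ₁ x) = timeMapT φ₁ - _
    have : timeMapT φ₁ = ∫ x in (0:ℝ)..φ₁, f φ₁ x := rfl
    rw [this, ← hadd, h2]
    ring
  -- G-integrability
  have hGα : ∀ a b : ℝ, IntervalIntegrable (G α) MeasureTheory.volume a b :=
    fun a b => (G_cont h0α.le hαπ).intervalIntegrable a b
  have hGφ₁ : ∀ a b : ℝ, IntervalIntegrable (G φ₁) MeasureTheory.volume a b :=
    fun a b => (G_cont h0φ₁.le h₁).intervalIntegrable a b
  -- inequality 1 : T φ₁ ≤ T α (θ-side)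
  have i1 : (∫ θ in (0:ℝ)..(π / 2), G φ₁ θ) ≤ ∫ θ in (0:ℝ)..(π / 2), G α θ := by
    apply intervalIntegral.integral_mono_on (by positivity) (hGφ₁ 0 (π/2)) (hGα 0 (π/2))
    intro θ _
    exact G_mono h0φ₁.le hφ₁α.le hαπ
  -- inequality 2 : tail φ₁ φ₀ ≤ tail α φ₀
  have ha1 : θof α φ₀ ≤ θof φ₁ φ₀ := by
    have hsφ₀ : 0 ≤ Real.sin φ₀ := Real.sin_nonneg_of_nonneg_of_le_pi h₀.le (by linarith)
    have hs1 : 0 < Real.sin φ₁ := Real.sin_pos_of_pos_of_lt_pi h0φ₁ (by linarith)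
    have hmono : Real.sin φ₁ ≤ Real.sin α :=
      Real.sin_le_sin_of_le_of_le_pi_div_two (by linarith) hαπ.le hφ₁α.le
    exact Real.monotone_arcsin (by gcongr)
  have ha2lt : θof φ₁ φ₀ < π / 2 := θof_lt h0φ₁ h₁ h₀.le h₀₁
  have ha10 : 0 ≤ θof α φ₀ := θof_nonneg h0α hαπ h₀.le (by linarith)
  have i2 : (∫ θ in (θof φ₁ φ₀)..(π / 2), G φ₁ θ)
      ≤ ∫ θ in (θof α φ₀)..(π / 2), G α θ := by
    have hsplit := intervalIntegral.integral_add_adjacent_intervals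
      (hGα (θof α φ₀) (θof φ₁ φ₀)) (hGα (θof φ₁ φ₀) (π/2))
    have hnn : 0 ≤ ∫ θ in (θof α φ₀)..(θof φ₁ φ₀), G α θ :=
      intervalIntegral.integral_nonneg ha1 (fun θ _ => (G_pos h0α.le hαπ θ).le)
    have hm : (∫ θ in (θof φ₁ φ₀)..(π / 2), G φ₁ θ)
        ≤ ∫ θ in (θof φ₁ φ₀)..(π / 2), G α θ := by
      apply intervalIntegral.integral_mono_on ha2lt.le
        (hGφ₁ _ _) (hGα _ _)
      intro θ _
      exact G_mono h0φ₁.le hφ₁α.le hαπ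
    linarith
  -- inequality 3 : 0 < tail α φ₁
  have i3 : 0 < ∫ θ in (θof α φ₁)..(π / 2), G α θ := by
    apply intervalIntegral.intervalIntegral_pos_of_pos_on (hGα _ _)
      (fun θ _ => G_pos h0α.le hαπ θ)
    exact θof_lt h0α hαπ h0φ₁.le hφ₁α
  rw [e2, e3, e5, e1, e4] at *
  linarith

/-- For `0 < φ₀ < φ₁ < π/2`, the map
`T_D(α) = 4T(α) − T₁(α, φ₀) − T₁(α, φ₁)` satisfies
`T_D(α) > T^* = 3T(φ₁) − T₁(φ₁, φ₀)` for every `α ∈ (φ₁, π/2)`. -/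
theorem timeMapTD_supercritical (φ₀ φ₁ : ℝ) (h₀ : 0 < φ₀) (h₀₁ : φ₀ < φ₁)
    (h₁ : φ₁ < π / 2) :
    ∀ α ∈ Set.Ioo φ₁ (π / 2),
      4 * timeMapT α - timeMapT1 α φ₀ - timeMapT1 α φ₁ >
        3 * timeMapT φ₁ - timeMapT1 φ₁ φ₀ := by
  exact timeMapTD_supercritical_aux φ₀ φ₁ h₀ h₀₁ h₁
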